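/- Let K be a field, n a positive integer, and let a_1,...,a_n, b_1,...,b_n be scalars from K such that a_1,...,a_n are mutually distinct and a_1,...,a_n, b_1,...,b_n are all mutually distinct from each other (i.e. a_i ≠ b_j for all i,j and a_i ≠ a_k for i ≠ k, b_i ≠ b_k for i ≠ k). Define A_i = (∏_{k=1}^n (a_i - b_k)) / (∏_{k ≠ i} (a_i - a_k)). Then for every j with 1 ≤ j ≤ n, ∑_{i=1}^n A_i/(a_i - b_j) = 1. -/

import Mathlib

open Polynomial Finset

theorem stmt0 {K : Type*} [Field K] {n : ℕ} (hn : 0 < n)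
    (a b : Fin n → K)
    (ha : Function.Injective a) (hb : Function.Injective b)
    (hab : ∀ i j, a i ≠ b j)
    (A : Fin n → K)
    (hA : ∀ i, A i = (∏ k, (a i - b k)) / (∏ k ∈ Finset.univ \ {i}, (a i - a k))) :
    ∀ j, ∑ i, A i / (a i - b j) = 1 := by
  intro j
  set p : K[X] := ∏ k, (X - C (b k)) with hp
  set q : K[X] := ∏ k, (X - C (a k)) with hq
  have hpm : p.Monic := monic_prod_of_monic _ _ fun k _ => monic_X_sub_C _
  have hqm : q.Monic := monic_prod_of_monic _ _ fun k _ => monic_X_sub_C _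
  have hpd : p.degree = n := by
    rw [hp, degree_prod]
    simp [degree_X_sub_C]
  have hqd : q.degree = n := by
    rw [hq, degree_prod]
    simp [degree_X_sub_C]
  have hdeg : (p - q).degree < n := by
    have := Polynomial.degree_sub_lt (hpd.trans hqd.symm) hpm.ne_zero
      (by rw [hpm.leadingCoeff, hqm.leadingCoeff])
    rwa [hpd] at this
  have hinj : Set.InjOn a (Finset.univ : Finset (Fin n)) := ha.injOn
  have hcard : ((Finset.univ : Finset (Fin n)).card : WithBot ℕ) = (n : WithBot ℕ) := by
    simp
  have hEq : p - q = Lagrange.interpolate Finset.univ a (fun i => (p - q).eval (a i)) :=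
    Lagrange.eq_interpolate hinj (by rw [hcard]; exact hdeg)
  have hev := congrArg (Polynomial.eval (b j)) hEq
  have hqbj : ∀ i, (a i - a i) = 0 := fun i => sub_self _
  have hpev : p.eval (b j) = 0 := by
    rw [hp, eval_prod]
    exact Finset.prod_eq_zero (Finset.mem_univ j) (by simp)
  have hqev : q.eval (b j) = ∏ k, (b j - a k) := by
    rw [hq, eval_prod]; simp
  have hfi : ∀ i, (p - q).eval (a i) = ∏ k, (a i - b k) := by
    intro i
    have : q.eval (a i) = 0 := by
      rw [hq, eval_prod]
      exact Finset.prod_eq_zero (Finset.mem_univ i) (by simp)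
    rw [eval_sub, this, sub_zero, hp, eval_prod]; simp
  -- evaluate the interpolation formula
  rw [eval_sub, hpev, hqev, Lagrange.interpolate_apply, eval_finset_sum] at hev
  simp only [eval_mul, eval_C, hfi] at hev
  -- basis evaluation
  have hbasis : ∀ i : Fin n, (Lagrange.basis Finset.univ a i).eval (b j) =
      ∏ k ∈ Finset.univ.erase i, (a i - a k)⁻¹ * (b j - a k) := by
    intro i
    rw [Lagrange.basis, eval_prod]
    refine Finset.prod_congr rfl fun k _ => ?_
    simp [Lagrange.basisDivisor]
  have hP : (∏ k, (b j - a k)) ≠ 0 := by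
    refine Finset.prod_ne_zero_iff.mpr fun k _ => sub_ne_zero_of_ne ?_
    exact fun h => hab k j h.symm
  -- show each summand equality
  have key : ∀ i : Fin n, (∏ k, (a i - b k)) * (Lagrange.basis Finset.univ a i).eval (b j)
      = A i / (a i - b j) * (-(∏ k, (b j - a k))) := by
    intro i
    have hai : (∏ k ∈ Finset.univ.erase i, (a i - a k)) ≠ 0 := by
      refine Finset.prod_ne_zero_iff.mpr fun k hk => sub_ne_zero_of_ne ?_
      exact fun h => (Finset.mem_erase.mp hk).1.symm (ha h)
    have haibj : a i - b j ≠ 0 := sub_ne_zero_of_ne (hab i j)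
    have hsplit : (∏ k, (b j - a k)) = (b j - a i) * ∏ k ∈ Finset.univ.erase i, (b j - a k) :=
      (Finset.mul_prod_erase _ _ (Finset.mem_univ i)).symm
    rw [hbasis, hA, Finset.sdiff_singleton_eq_erase, hsplit, Finset.prod_mul_distrib,
      Finset.prod_inv_distrib]
    field_simp
    ring
  rw [Finset.sum_congr rfl fun i _ => key i, ← Finset.sum_mul] at hev
  have := mul_right_cancel₀ (neg_ne_zero.mpr hP) (by rw [← hev]; ring : (∑ i, A i / (a i - b j)) * (-(∏ k, (b j - a k))) = 1 * (-(∏ k, (b j - a k))))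
  simpa using this
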